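/- Let α = [0; a₁, a₂, …] ∈ (0,1) be irrational with convergents pₙ/qₙ and θₙ = qₙα − pₙ. Let (sᵢ), (tᵢ) be sequences of natural numbers with sᵢ < tᵢ, s_{i+1} = tᵢ + 2 for all i, and |tᵢ − sᵢ| → ∞. Then the element β = Σ_{i=1}^∞ θ_{tᵢ+1} (taken mod 1, as an element of 𝕋) has the following property (⋆): for every ε > 0 there exists B ⊆ ℕ with natural density d(B) = 0 such that for every n ∉ B and every integer r with 1 ≤ r ≤ a_{n+1}, one has ‖r qₙ β‖ < ε. -/

import Mathlib

open Filter Topology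

noncomputable section

/-- The circle group `𝕋 = ℝ/ℤ`. -/
abbrev Circle1 : Type := AddCircle (1 : ℝ)

/-- A set of naturals has natural density zero. -/
def DensityZero (A : Set ℕ) : Prop :=
  Tendsto (fun n : ℕ => ((A ∩ Set.Icc 1 n).ncard : ℝ) / n) atTop (𝓝 0)

/-- Statistical convergence to `0` of a sequence in the circle. -/
def StatTendstoZero (x : ℕ → Circle1) : Prop :=
  ∀ ε : ℝ, 0 < ε → DensityZero {n : ℕ | ε ≤ ‖x n‖}

/-- The characterized subgroup `t_(a_n)(𝕋)`. -/
def charSet (a : ℕ → ℤ) : Set Circle1 :=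
  {x : Circle1 | Tendsto (fun n : ℕ => a n • x) atTop (𝓝 0)}

/-- The statistically characterized subgroup `t^s_(a_n)(𝕋)`. -/
def statCharSet (a : ℕ → ℤ) : Set Circle1 :=
  {x : Circle1 | StatTendstoZero (fun n : ℕ => a n • x)}

namespace CF

/-- Gauss-map orbit of `α`: `G α 0 = α`, `G α (n+1) = {1 / G α n}`. -/
def G (α : ℝ) : ℕ → ℝ
  | 0 => α
  | n + 1 => Int.fract (G α n)⁻¹

/-- The partial quotients of the regular continued fraction `α = [0; a 1, a 2, …]`
(with the convention `a 0 = 0`). -/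
def a (α : ℝ) : ℕ → ℕ
  | 0 => 0
  | n + 1 => ⌊(G α n)⁻¹⌋₊

/-- Denominators of the convergents of the continued fraction of `α`. -/
def q (α : ℝ) : ℕ → ℕ
  | 0 => 1
  | 1 => a α 1
  | (n + 2) => a α (n + 2) * q α (n + 1) + q α n

/-- Numerators of the convergents of the continued fraction of `α`. -/
def p (α : ℝ) : ℕ → ℕ
  | 0 => 0
  | 1 => 1
  | (n + 2) => a α (n + 2) * p α (n + 1) + p α n

/-- `θ n = q n * α - p n`. -/
def θ (α : ℝ) (n : ℕ) : ℝ := (q α n : ℝ) * α - (p α n : ℝ)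

end CF

open CF

namespace CF

variable {α : ℝ}

theorem hG (hα : α ∈ Set.Ioo (0:ℝ) 1) (hirr : Irrational α) :
    ∀ n, G α n ∈ Set.Ioo (0:ℝ) 1 ∧ Irrational (G α n) := by
  intro n
  induction n with
  | zero => exact ⟨hα, hirr⟩
  | succ n ih =>
    obtain ⟨⟨h0, h1⟩, hi⟩ := ih
    have hfr : Irrational (Int.fract (G α n)⁻¹) := by
      unfold Int.fract; exact (hi.inv).sub_intCast _
    exact ⟨⟨(Int.fract_nonneg _).lt_of_ne' hfr.ne_zero, Int.fract_lt_one _⟩,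
      show Irrational (G α (n+1)) from hfr⟩

theorem one_lt_inv_G (hα : α ∈ Set.Ioo (0:ℝ) 1) (hirr : Irrational α) (n : ℕ) :
    1 < (G α n)⁻¹ := by
  obtain ⟨⟨h0, h1⟩, _⟩ := hG hα hirr n
  exact (one_lt_inv₀ h0).mpr h1

theorem inv_G_eq (hα : α ∈ Set.Ioo (0:ℝ) 1) (hirr : Irrational α) (n : ℕ) :
    (G α n)⁻¹ = (a α (n+1) : ℝ) + G α (n+1) := by
  have h1 := one_lt_inv_G hα hirr n
  have h0 : (0:ℝ) ≤ (G α n)⁻¹ := by linarith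
  show (G α n)⁻¹ = (⌊(G α n)⁻¹⌋₊ : ℝ) + Int.fract (G α n)⁻¹
  rw [Int.fract]
  rw [natCast_floor_eq_intCast_floor h0]; ring

theorem one_le_a (hα : α ∈ Set.Ioo (0:ℝ) 1) (hirr : Irrational α) (n : ℕ) :
    1 ≤ a α (n+1) := by
  have := one_lt_inv_G hα hirr n
  exact Nat.le_floor (by exact_mod_cast this.le)

-- two-step induction helper
theorem two_step {P : ℕ → Prop} (h0 : P 0) (h1 : P 1)
    (hs : ∀ n, P n → P (n+1) → P (n+2)) : ∀ n, P n := by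
  intro n
  induction n using Nat.strong_induction_on with
  | _ n ih =>
    match n with
    | 0 => exact h0
    | 1 => exact h1
    | (m+2) => exact hs m (ih m (by omega)) (ih (m+1) (by omega))

theorem one_le_q (hα : α ∈ Set.Ioo (0:ℝ) 1) (hirr : Irrational α) :
    ∀ n, 1 ≤ q α n := by
  refine two_step (by simp [q]) ?_ ?_
  · simpa [q] using one_le_a hα hirr 0
  · intro n h1 h2
    have := one_le_a hα hirr (n+1)
    show 1 ≤ a α (n+2) * q α (n+1) + q α n
    nlinarith

theorem q_mono (hα : α ∈ Set.Ioo (0:ℝ) 1) (hirr : Irrational α) :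
    Monotone (q α) := by
  have step : ∀ n, q α n ≤ q α (n+1) := by
    intro n
    match n with
    | 0 => simpa [q] using one_le_a hα hirr 0
    | (m+1) =>
      show q α (m+1) ≤ a α (m+2) * q α (m+1) + q α m
      have := one_le_a hα hirr (m+1)
      nlinarith [one_le_q hα hirr m]
  exact monotone_nat_of_le_succ step

theorem q_double (hα : α ∈ Set.Ioo (0:ℝ) 1) (hirr : Irrational α) (n : ℕ) :
    2 * q α n ≤ q α (n+2) := by
  show 2 * q α n ≤ a α (n + 2) * q α (n + 1) + q α n
  have h1 := one_le_a hα hirr (n+1)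
  have h2 := q_mono hα hirr (show n ≤ n+1 by omega)
  nlinarith

theorem q_growth (hα : α ∈ Set.Ioo (0:ℝ) 1) (hirr : Irrational α) (n k : ℕ) :
    2^k * q α n ≤ q α (n + 2*k) := by
  induction k with
  | zero => simp
  | succ k ih =>
    have h := q_double hα hirr (n + 2*k)
    have : n + 2*(k+1) = (n + 2*k) + 2 := by omega
    rw [this, pow_succ]
    calc 2^k * 2 * q α n = 2 * (2^k * q α n) := by ring
    _ ≤ 2 * q α (n + 2*k) := by omega
    _ ≤ q α (n + 2*k + 2) := h

theorem aq_le (hα : α ∈ Set.Ioo (0:ℝ) 1) (hirr : Irrational α) (n : ℕ) :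
    a α (n+1) * q α n ≤ q α (n+1) := by
  match n with
  | 0 => simp [q]
  | (m+1) => show a α (m+2) * q α (m+1) ≤ a α (m + 2) * q α (m + 1) + q α m; omega

theorem theta_prod (hα : α ∈ Set.Ioo (0:ℝ) 1) (hirr : Irrational α) :
    ∀ n, θ α n = (-1)^n * ∏ k ∈ Finset.range (n+1), G α k := by
  have key : ∀ n, (G α n) * ((a α (n+1) : ℝ) + G α (n+1)) = 1 := by
    intro n
    rw [← inv_G_eq hα hirr n]
    exact mul_inv_cancel₀ (hG hα hirr n).1.1.ne'
  refine two_step ?_ ?_ ?_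
  · simp [θ, q, p, G, Finset.prod_range_one]
  · have h := key 0
    have hG0 : G α 0 = α := rfl
    rw [hG0] at h
    show θ α 1 = (-1)^1 * ∏ k ∈ Finset.range 2, G α k
    simp only [θ, q, p, Finset.prod_range_succ, Finset.prod_range_one, hG0]
    push_cast
    linear_combination h
  · intro n ih1 ih2
    have hrec : θ α (n+2) = (a α (n+2) : ℝ) * θ α (n+1) + θ α n := by
      simp only [θ, q, p]; push_cast; ring
    have hx : G α (n+1) * G α (n+2) = 1 - (a α (n+2):ℝ) * G α (n+1) := by
      linear_combination key (n+1)
    rw [hrec, ih1, ih2, Finset.prod_range_succ (n := n+2), Finset.prod_range_succ (n := n+1)]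
    linear_combination (-(-1:ℝ)^(n+2) * (∏ k ∈ Finset.range (n+1), G α k)) * hx

/-- big Theta: absolute value of θ -/
def P (α : ℝ) (n : ℕ) : ℝ := ∏ k ∈ Finset.range (n+1), G α k

theorem P_pos (hα : α ∈ Set.Ioo (0:ℝ) 1) (hirr : Irrational α) (n : ℕ) : 0 < P α n :=
  Finset.prod_pos fun k _ => (hG hα hirr k).1.1

theorem P_anti (hα : α ∈ Set.Ioo (0:ℝ) 1) (hirr : Irrational α) {m n : ℕ} (h : m ≤ n) :
    P α n ≤ P α m := by
  induction n with
  | zero => simp_all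
  | succ n ih =>
    rcases Nat.lt_or_ge m (n+1) with h' | h'
    · have : P α (n+1) = P α n * G α (n+1) := Finset.prod_range_succ _ _
      rw [this]
      have h1 := P_pos hα hirr n
      obtain ⟨h2a, h2b⟩ := (hG hα hirr (n+1)).1
      nlinarith [ih (by omega)]
    · have : m = n+1 := by omega
      simp [this]

theorem theta_eq_P (hα : α ∈ Set.Ioo (0:ℝ) 1) (hirr : Irrational α) (n : ℕ) :
    θ α n = (-1)^n * P α n := theta_prod hα hirr n

theorem abs_theta (hα : α ∈ Set.Ioo (0:ℝ) 1) (hirr : Irrational α) (n : ℕ) :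
    |θ α n| = P α n := by
  rw [theta_eq_P hα hirr, abs_mul, abs_pow, abs_neg, abs_one, one_pow, one_mul,
    abs_of_pos (P_pos hα hirr n)]

theorem det (n : ℕ) : (p α (n+1) : ℤ) * q α n - p α n * q α (n+1) = (-1)^n := by
  induction n with
  | zero => simp [p, q]
  | succ n ih =>
    have hp : (p α (n+2) : ℤ) = a α (n+2) * p α (n+1) + p α n := by
      show ((a α (n + 2) * p α (n + 1) + p α n : ℕ) : ℤ) = _; push_cast; ring
    have hq : (q α (n+2) : ℤ) = a α (n+2) * q α (n+1) + q α n := by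
      show ((a α (n + 2) * q α (n + 1) + q α n : ℕ) : ℤ) = _; push_cast; ring
    rw [hp, hq, pow_succ]
    linear_combination (-1 : ℤ) * ih

theorem qP_add (hα : α ∈ Set.Ioo (0:ℝ) 1) (hirr : Irrational α) (n : ℕ) :
    (q α (n+1) : ℝ) * P α n + (q α n : ℝ) * P α (n+1) = 1 := by
  have hdR : ((p α (n+1) : ℝ) * q α n - p α n * q α (n+1)) = (-1)^n := by
    exact_mod_cast congrArg (fun z : ℤ => (z : ℝ)) (det (α := α) n)
  have h1 : (q α (n+1) : ℝ) * θ α n - (q α n : ℝ) * θ α (n+1) = ((-1 : ℝ))^n := by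
    simp only [θ]; linear_combination hdR
  rw [theta_eq_P hα hirr, theta_eq_P hα hirr] at h1
  rcases Nat.even_or_odd n with he | ho
  · rw [he.neg_one_pow, (he.add_one).neg_one_pow] at h1
    push_cast at h1 ⊢
    linarith
  · rw [ho.neg_one_pow, (ho.add_one).neg_one_pow] at h1
    push_cast at h1 ⊢
    linarith

theorem qP_le_one (hα : α ∈ Set.Ioo (0:ℝ) 1) (hirr : Irrational α) (n : ℕ) :
    (q α (n+1) : ℝ) * P α n ≤ 1 := by
  have h := qP_add hα hirr n
  have h1 := P_pos hα hirr (n+1)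
  have h2 : (0:ℝ) ≤ q α n := by positivity
  nlinarith

theorem qtheta_swap (n m : ℕ) : (q α n : ℝ) * θ α m
    = (q α m : ℝ) * θ α n + (((q α m : ℤ) * p α n - (q α n : ℤ) * p α m : ℤ) : ℝ) := by
  simp only [θ]; push_cast; ring

end CF

section Beta

variable {α : ℝ} {s t : ℕ → ℕ}
open CF

/-- t grows at least by 3 each step -/
theorem t_growth (hst : ∀ i, s i < t i) (hcons : ∀ i, s (i + 1) = t i + 2) :
    ∀ i d : ℕ, t i + 2*d ≤ t (i + d) := by
  intro i d
  induction d with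
  | zero => simp
  | succ d ih =>
    have h1 : s (i + d + 1) = t (i + d) + 2 := hcons (i + d)
    have h2 := hst (i + d + 1)
    have h3 : i + (d+1) = i + d + 1 := by omega
    rw [h3]; omega

theorem abs_theta_le (hα : α ∈ Set.Ioo (0:ℝ) 1) (hirr : Irrational α)
    (hst : ∀ i, s i < t i) (hcons : ∀ i, s (i + 1) = t i + 2) (i j : ℕ) :
    (q α (t i + 2) : ℝ) * |θ α (t (i + j) + 1)| ≤ (1/2)^j := by
  rw [abs_theta hα hirr]
  have hg : 2^j * q α (t i + 2) ≤ q α (t (i+j) + 2) := by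
    calc 2^j * q α (t i + 2) ≤ q α (t i + 2 + 2*j) := q_growth hα hirr _ _
    _ ≤ q α (t (i+j) + 2) := q_mono hα hirr (by have := t_growth hst hcons i j; omega)
  have h1 : (q α (t (i+j) + 2) : ℝ) * P α (t (i+j) + 1) ≤ 1 := qP_le_one hα hirr _
  have hP : 0 < P α (t (i+j) + 1) := P_pos hα hirr _
  have hgR : (2:ℝ)^j * q α (t i + 2) ≤ q α (t (i+j) + 2) := by exact_mod_cast hg
  rw [one_div, inv_pow, ← one_div]
  rw [le_div_iff₀ (by positivity)]
  calc (q α (t i + 2):ℝ) * P α (t (i+j) + 1) * 2^j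
      = (2^j * q α (t i + 2)) * P α (t (i+j) + 1) := by ring
    _ ≤ (q α (t (i+j) + 2) : ℝ) * P α (t (i+j) + 1) := by
        exact mul_le_mul_of_nonneg_right hgR hP.le
    _ ≤ 1 := h1

theorem theta_summable (hα : α ∈ Set.Ioo (0:ℝ) 1) (hirr : Irrational α)
    (hst : ∀ i, s i < t i) (hcons : ∀ i, s (i + 1) = t i + 2) (i : ℕ) :
    Summable (fun j => |θ α (t (i + j) + 1)|) := by
  have hq : (1:ℝ) ≤ q α (t i + 2) := by exact_mod_cast one_le_q hα hirr _
  apply Summable.of_nonneg_of_le (fun j => abs_nonneg _) (fun j => ?_)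
    (summable_geometric_of_lt_one (by norm_num) (by norm_num) : Summable fun j => (1/2:ℝ)^j)
  have := abs_theta_le hα hirr hst hcons i j
  nlinarith [abs_nonneg (θ α (t (i + j) + 1))]


set_option maxHeartbeats 1000000 in
theorem tail_bound (hα : α ∈ Set.Ioo (0:ℝ) 1) (hirr : Irrational α)
    (hst : ∀ i, s i < t i) (hcons : ∀ i, s (i + 1) = t i + 2) (i : ℕ) :
    (q α (t i + 2) : ℝ) * |∑' j, θ α (t (j + i) + 1)| ≤ 2 := by
  have hsum := theta_summable hα hirr hst hcons i
  have heq : (fun j => θ α (t (j + i) + 1)) = (fun j => θ α (t (i + j) + 1)) := by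
    funext j; rw [Nat.add_comm j i]
  have hsum2 : Summable (fun j => ‖θ α (t (j + i) + 1)‖) := by
    simp only [Real.norm_eq_abs]
    exact (summable_congr (fun j => by rw [Nat.add_comm j i])).mpr hsum
  have h1 : |∑' j, θ α (t (j + i) + 1)| ≤ ∑' j, |θ α (t (i + j) + 1)| := by
    have h := norm_tsum_le_tsum_norm hsum2
    rw [Real.norm_eq_abs] at h
    refine h.trans (le_of_eq ?_)
    exact tsum_congr fun j => by rw [Real.norm_eq_abs, Nat.add_comm j i]
  have hle : ∀ j, (q α (t i + 2) : ℝ) * |θ α (t (i + j) + 1)| ≤ (1/2)^j :=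
    abs_theta_le hα hirr hst hcons i
  have hgs : Summable fun j : ℕ => (1/2:ℝ)^j :=
    summable_geometric_of_lt_one (by norm_num) (by norm_num)
  have h3 : (∑' j, (q α (t i + 2) : ℝ) * |θ α (t (i + j) + 1)|) ≤ ∑' j, (1/2:ℝ)^j :=
    Summable.tsum_le_tsum hle (hsum.mul_left _) hgs
  have h4 : (∑' j : ℕ, (1/2:ℝ)^j) = 2 := by
    rw [tsum_geometric_of_lt_one (by norm_num) (by norm_num)]; norm_num
  have h5 : (∑' j, (q α (t i + 2) : ℝ) * |θ α (t (i + j) + 1)|)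
      = (q α (t i + 2) : ℝ) * ∑' j, |θ α (t (i + j) + 1)| := tsum_mul_left
  have hq : (0:ℝ) ≤ q α (t i + 2) := by positivity
  nlinarith [h1, h3]
theorem prev_sum (hα : α ∈ Set.Ioo (0:ℝ) 1) (hirr : Irrational α)
    (hst : ∀ i, s i < t i) (hcons : ∀ i, s (i + 1) = t i + 2) (i : ℕ) (hi : 1 ≤ i) :
    (∑ j ∈ Finset.range i, (q α (t j + 1) : ℝ)) ≤ 2 * q α (t (i-1) + 1) := by
  have hterm : ∀ j < i, (q α (t j + 1) : ℝ) ≤ (q α (t (i-1) + 1) : ℝ) * (1/2)^(i-1-j) := by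
    intro j hj
    have hg : 2^(i-1-j) * q α (t j + 1) ≤ q α (t (i-1) + 1) := by
      calc 2^(i-1-j) * q α (t j + 1) ≤ q α (t j + 1 + 2*(i-1-j)) := q_growth hα hirr _ _
      _ ≤ q α (t (i-1) + 1) := by
          apply q_mono hα hirr
          have := t_growth hst hcons j (i-1-j)
          have hji : j + (i-1-j) = i - 1 := by omega
          rw [hji] at this
          omega
    have hgR : (2:ℝ)^(i-1-j) * q α (t j + 1) ≤ q α (t (i-1) + 1) := by exact_mod_cast hg
    rw [one_div, inv_pow, ← div_eq_mul_inv, le_div_iff₀ (by positivity)]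
    linarith [hgR]
  calc (∑ j ∈ Finset.range i, (q α (t j + 1) : ℝ))
      ≤ ∑ j ∈ Finset.range i, (q α (t (i-1) + 1) : ℝ) * (1/2)^(i-1-j) :=
        Finset.sum_le_sum (fun j hj => hterm j (Finset.mem_range.mp hj))
    _ = (q α (t (i-1) + 1) : ℝ) * ∑ j ∈ Finset.range i, (1/2:ℝ)^(i-1-j) := by
        rw [Finset.mul_sum]
    _ ≤ (q α (t (i-1) + 1) : ℝ) * 2 := by
        apply mul_le_mul_of_nonneg_left ?_ (by positivity)
        have hre : ∑ j ∈ Finset.range i, (1/2:ℝ)^(i-1-j) = ∑ d ∈ Finset.range i, (1/2:ℝ)^d := by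
          simpa using Finset.sum_range_reflect (fun d => (1/2:ℝ)^d) i
        rw [hre]
        have hgs : Summable fun d : ℕ => (1/2:ℝ)^d :=
          summable_geometric_of_lt_one (by norm_num) (by norm_num)
        have := Summable.sum_le_tsum (Finset.range i) (fun d _ => by positivity) hgs
        have h4 : (∑' d : ℕ, (1/2:ℝ)^d) = 2 := by
          rw [tsum_geometric_of_lt_one (by norm_num) (by norm_num)]; norm_num
        linarith
    _ = 2 * q α (t (i-1) + 1) := by ring

theorem circ_norm_le (x : ℝ) (M : ℤ) : ‖((x + M : ℝ) : AddCircle (1:ℝ))‖ ≤ |x| := by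
  have h1 : ((x + M : ℝ) : AddCircle (1:ℝ)) = (x : AddCircle (1:ℝ)) := by
    simp [AddCircle.coe_add]
  rw [h1]
  exact (QuotientAddGroup.norm_mk_le_norm (m := x)).trans_eq (Real.norm_eq_abs x)

set_option maxHeartbeats 1000000 in
theorem main_est (hα : α ∈ Set.Ioo (0:ℝ) 1) (hirr : Irrational α)
    (hst : ∀ i, s i < t i) (hcons : ∀ i, s (i + 1) = t i + 2)
    {β : ℝ} (hβ : β = ∑' i : ℕ, θ α (t i + 1))
    (k n i r : ℕ) (h1 : s i + 2*k ≤ n) (h2 : n + 2*k ≤ t i)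
    (hr1 : 1 ≤ r) (hr2 : r ≤ a α (n+1)) :
    ‖((r * q α n : ℕ) : ℤ) • ((β : ℝ) : AddCircle (1:ℝ))‖ ≤ 4 / 2^k := by
  have hsummable : Summable (fun j => θ α (t j + 1)) := by
    have h := (theta_summable hα hirr hst hcons 0).of_abs
    exact (summable_congr (fun j => by rw [Nat.zero_add])).mp h
  set T : ℝ := ∑' j, θ α (t (j + i) + 1) with hT
  have hsplit : β = (∑ j ∈ Finset.range i, θ α (t j + 1)) + T := by
    rw [hβ]; exact (Summable.sum_add_tsum_nat_add i hsummable).symm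
  set c : ℕ → ℤ := fun j => (q α (t j + 1) : ℤ) * p α n - (q α n : ℤ) * p α (t j + 1) with hc
  set A : ℝ := ∑ j ∈ Finset.range i, (q α (t j + 1) : ℝ) with hA
  have hswap : (q α n : ℝ) * (∑ j ∈ Finset.range i, θ α (t j + 1))
      = θ α n * A + ((∑ j ∈ Finset.range i, c j : ℤ) : ℝ) := by
    rw [Finset.mul_sum]
    calc (∑ j ∈ Finset.range i, (q α n : ℝ) * θ α (t j + 1))
        = ∑ j ∈ Finset.range i, ((q α (t j + 1) : ℝ) * θ α n + ((c j : ℤ) : ℝ)) :=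
          Finset.sum_congr rfl (fun j _ => qtheta_swap _ _)
      _ = (∑ j ∈ Finset.range i, (q α (t j + 1) : ℝ) * θ α n)
            + ∑ j ∈ Finset.range i, ((c j : ℤ) : ℝ) := Finset.sum_add_distrib
      _ = θ α n * A + ((∑ j ∈ Finset.range i, c j : ℤ) : ℝ) := by
          rw [← Finset.sum_mul]; push_cast; ring
  have hx : ((r * q α n : ℕ) : ℝ) * β
      = ((r:ℝ) * θ α n * A + (r:ℝ) * (q α n : ℝ) * T)
        + (((r : ℤ) * ∑ j ∈ Finset.range i, c j : ℤ) : ℝ) := by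
    rw [hsplit]
    push_cast
    push_cast at hswap
    linear_combination (r:ℝ) * hswap
  have hcoe : (((r * q α n : ℕ) : ℤ)) • ((β : ℝ) : AddCircle (1:ℝ))
      = ((((r * q α n : ℕ) : ℝ) * β : ℝ) : AddCircle (1:ℝ)) := by
    rw [← AddCircle.coe_zsmul]
    norm_num
  rw [hcoe, hx]
  have hnorm := circ_norm_le ((r:ℝ) * θ α n * A + (r:ℝ) * (q α n : ℝ) * T)
    ((r : ℤ) * ∑ j ∈ Finset.range i, c j)
  refine hnorm.trans ?_
  -- now bound |r θ A + r q T| ≤ 4/2^k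
  have hP : 0 < P α n := P_pos hα hirr n
  have hAnn : 0 ≤ A := Finset.sum_nonneg (fun j _ => by positivity)
  have g1 : (r:ℝ) ≤ (a α (n+1) : ℝ) := by exact_mod_cast hr2
  have g2 : (a α (n+1) : ℝ) * q α n ≤ q α (n+1) := by exact_mod_cast aq_le hα hirr n
  have g3 : (q α (n+1) : ℝ) * P α n ≤ 1 := qP_le_one hα hirr n
  have hrn : (0:ℝ) ≤ r := by positivity
  have hqn : (0:ℝ) ≤ q α n := by positivity
  -- piece 1
  have piece1 : (r:ℝ) * |θ α n| * A ≤ 2 / 2^k := by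
    rcases Nat.eq_zero_or_pos i with hi0 | hi1
    · have : A = 0 := by rw [hA, hi0]; simp
      rw [this, mul_zero]
      positivity
    · have hAps := prev_sum hα hirr hst hcons i hi1
      rw [← hA] at hAps
      have hm : 2^k * q α (t (i-1) + 1) ≤ q α n := by
        have hsi : s i = t (i-1) + 2 := by
          have := hcons (i-1)
          have : i - 1 + 1 = i := by omega
          rw [← this]; exact hcons (i-1)
        calc 2^k * q α (t (i-1) + 1) ≤ q α (t (i-1) + 1 + 2*k) := q_growth hα hirr _ _
        _ ≤ q α n := q_mono hα hirr (by omega)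
      have hmR : (2:ℝ)^k * q α (t (i-1) + 1) ≤ q α n := by exact_mod_cast hm
      rw [abs_theta hα hirr, le_div_iff₀ (by positivity)]
      have e1 : (r:ℝ) * P α n * A ≤ (a α (n+1) : ℝ) * P α n * (2 * q α (t (i-1) + 1)) := by
        apply mul_le_mul (mul_le_mul_of_nonneg_right g1 hP.le) hAps hAnn (by positivity)
      have e2 : (r:ℝ) * P α n * A * 2^k
          ≤ (a α (n+1) : ℝ) * P α n * (2 * q α (t (i-1) + 1)) * 2^k :=
        mul_le_mul_of_nonneg_right e1 (by positivity)
      have e3 : (a α (n+1) : ℝ) * P α n * (2 * q α (t (i-1) + 1)) * 2^k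
          = 2 * ((a α (n+1) : ℝ) * P α n) * (2^k * q α (t (i-1) + 1)) := by ring
      have e4 : 2 * ((a α (n+1) : ℝ) * P α n) * (2^k * q α (t (i-1) + 1))
          ≤ 2 * ((a α (n+1) : ℝ) * P α n) * q α n :=
        mul_le_mul_of_nonneg_left hmR (by positivity)
      have e5 : 2 * ((a α (n+1) : ℝ) * P α n) * q α n
          = 2 * (((a α (n+1) : ℝ) * q α n) * P α n) := by ring
      have e6 : ((a α (n+1) : ℝ) * q α n) * P α n ≤ (q α (n+1) : ℝ) * P α n :=
        mul_le_mul_of_nonneg_right g2 hP.le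
      nlinarith [e2, e4, e6, g3]
  -- piece 2
  have piece2 : (r:ℝ) * (q α n : ℝ) * |T| ≤ 2 / 2^k := by
    have ht := tail_bound hα hirr hst hcons i
    rw [← hT] at ht
    have hm2 : 2^k * q α (n+1) ≤ q α (t i + 2) := by
      calc 2^k * q α (n+1) ≤ q α (n + 1 + 2*k) := q_growth hα hirr _ _
      _ ≤ q α (t i + 2) := q_mono hα hirr (by omega)
    have hm2R : (2:ℝ)^k * q α (n+1) ≤ q α (t i + 2) := by exact_mod_cast hm2
    rw [le_div_iff₀ (by positivity)]
    have f1 : (r:ℝ) * (q α n : ℝ) ≤ (q α (n+1) : ℝ) := by nlinarith [g1, g2, hqn]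
    have f1T := mul_le_mul_of_nonneg_right f1 (abs_nonneg T)
    have f2 : (r:ℝ) * (q α n : ℝ) * |T| * 2^k ≤ (q α (n+1) : ℝ) * |T| * 2^k :=
      mul_le_mul_of_nonneg_right f1T (by positivity)
    have f3 : (q α (n+1) : ℝ) * |T| * 2^k ≤ (q α (t i + 2) : ℝ) * |T| := by
      have h := mul_le_mul_of_nonneg_right hm2R (abs_nonneg T)
      nlinarith [h]
    linarith [f2, f3, ht]
  calc |(r:ℝ) * θ α n * A + (r:ℝ) * (q α n : ℝ) * T|
      ≤ |(r:ℝ) * θ α n * A| + |(r:ℝ) * (q α n : ℝ) * T| := abs_add_le _ _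
    _ ≤ (r:ℝ) * |θ α n| * A + (r:ℝ) * (q α n : ℝ) * |T| := by
        rw [abs_mul, abs_mul, abs_mul, abs_mul]
        rw [abs_of_nonneg hrn, abs_of_nonneg hqn, abs_of_nonneg hAnn]
    _ ≤ 2 / 2^k + 2 / 2^k := add_le_add piece1 piece2
    _ = 4 / 2^k := by ring

theorem s_lb (hst : ∀ i, s i < t i) (hcons : ∀ i, s (i + 1) = t i + 2) :
    ∀ j, j ≤ s j := by
  intro j
  induction j with
  | zero => omega
  | succ j ih =>
    have h1 := hcons j
    have h2 := hst j
    omega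

theorem density_bad (hst : ∀ i, s i < t i) (hcons : ∀ i, s (i + 1) = t i + 2)
    (hgap : Filter.Tendsto (fun i => t i - s i) Filter.atTop Filter.atTop) (k : ℕ) :
    DensityZero {n : ℕ | ¬ ∃ i, s i + 2*k ≤ n ∧ n + 2*k ≤ t i} := by
  set B := {n : ℕ | ¬ ∃ i, s i + 2*k ≤ n ∧ n + 2*k ≤ t i} with hB
  set C : ℕ := 4*k + 2 with hC
  rw [DensityZero, Metric.tendsto_atTop]
  intro ε hε
  -- choose L
  set L : ℕ := ⌈(2*C:ℝ)/ε⌉₊ + 1 with hL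
  have hL1 : 1 ≤ L := by omega
  have hLε : (C:ℝ)/L < ε/2 := by
    have h1 : (2*C:ℝ)/ε < L := by
      calc (2*C:ℝ)/ε ≤ (⌈(2*C:ℝ)/ε⌉₊ : ℝ) := Nat.le_ceil _
      _ < L := by rw [hL]; push_cast; linarith
    rw [div_lt_div_iff₀ (by positivity) (by norm_num)]
    rw [div_lt_iff₀ hε] at h1
    nlinarith
  -- choose i₀
  obtain ⟨i₀, hi₀⟩ := (Filter.tendsto_atTop.mp hgap L).exists_forall_of_atTop
  have hgap' : ∀ i, i₀ ≤ i → s i + L ≤ t i := fun i hi => by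
    have h1 := hi₀ i hi; have h2 := hst i; omega
  have s_growth : ∀ d, s i₀ + d*L ≤ s (i₀ + d) := by
    intro d
    induction d with
    | zero => simp
    | succ d ih =>
      have h1 := hcons (i₀ + d)
      have h2 := hgap' (i₀ + d) (by omega)
      have h3 : i₀ + (d+1) = (i₀ + d) + 1 := by omega
      have h4 : (d+1) * L = d*L + L := by ring
      rw [h3, h1, h4]
      omega
  set D : ℕ := (s i₀ + 1) + (i₀ + 1) * C with hD
  have count : ∀ N : ℕ, (B ∩ Set.Icc 1 N).ncard ≤ D + (N/L)*C := by
    intro N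
    classical
    set I : ℕ := i₀ + N/L + 1 with hI
    set F : Finset ℕ := Finset.Icc 0 (s i₀) ∪ (Finset.range I).biUnion
      (fun i => Finset.Icc (s i) (s i + 2*k) ∪ Finset.Icc (t i + 1 - 2*k) (t i + 1)) with hF
    have hsub : B ∩ Set.Icc 1 N ⊆ ↑F := by
      rintro n ⟨hnB, hn1, hnN⟩
      by_cases hsmall : n ≤ s i₀
      · exact Finset.mem_coe.mpr (Finset.mem_union_left _
          (Finset.mem_Icc.mpr ⟨by omega, hsmall⟩))
      push_neg at hsmall
      set i := Nat.findGreatest (fun i => s i ≤ n) n with hi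
      have hin : i₀ ≤ n := le_trans (s_lb hst hcons i₀) (by omega)
      have hPi : s i ≤ n :=
        Nat.findGreatest_spec (P := fun j => s j ≤ n) hin (by omega : s i₀ ≤ n)
      have hii₀ : i₀ ≤ i := Nat.le_findGreatest (P := fun j => s j ≤ n) hin (by omega)
      have hni : n ≤ t i + 1 := by
        by_contra hcon
        push_neg at hcon
        have hs1 : s (i+1) ≤ n := by rw [hcons i]; omega
        have hlt : i + 1 ≤ n := le_trans (s_lb hst hcons (i+1)) hs1
        exact Nat.findGreatest_is_greatest (P := fun j => s j ≤ n) (Nat.lt_succ_self i) hlt hs1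
      have hiI : i < I := by
        have hsg := s_growth (i - i₀)
        have he : i₀ + (i - i₀) = i := by omega
        rw [he] at hsg
        have hley : (i - i₀) * L ≤ N := by omega
        have := (Nat.le_div_iff_mul_le (by omega : 0 < L)).mpr hley
        omega
      have hbad : n < s i + 2*k ∨ t i < n + 2*k := by
        have hnB' : ¬ ∃ j, s j + 2*k ≤ n ∧ n + 2*k ≤ t j := hnB
        push_neg at hnB'
        rcases Nat.lt_or_ge n (s i + 2*k) with h | h
        · exact Or.inl h
        · right; have := hnB' i h; omega
      refine Finset.mem_coe.mpr (Finset.mem_union_right _ (Finset.mem_biUnion.mpr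
        ⟨i, Finset.mem_range.mpr hiI, ?_⟩))
      rcases hbad with h | h
      · exact Finset.mem_union_left _ (Finset.mem_Icc.mpr ⟨hPi, by omega⟩)
      · exact Finset.mem_union_right _ (Finset.mem_Icc.mpr ⟨by omega, hni⟩)
    have hcard : F.card ≤ (s i₀ + 1) + I * C := by
      calc F.card ≤ (Finset.Icc 0 (s i₀)).card + ((Finset.range I).biUnion
            (fun i => Finset.Icc (s i) (s i + 2*k) ∪ Finset.Icc (t i + 1 - 2*k) (t i + 1))).card :=
            Finset.card_union_le _ _
      _ ≤ (s i₀ + 1) + ∑ i ∈ Finset.range I,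
            (Finset.Icc (s i) (s i + 2*k) ∪ Finset.Icc (t i + 1 - 2*k) (t i + 1)).card := by
          apply add_le_add
          · rw [Nat.card_Icc]; omega
          · exact Finset.card_biUnion_le
      _ ≤ (s i₀ + 1) + ∑ i ∈ Finset.range I, C := by
          apply Nat.add_le_add_left
          apply Finset.sum_le_sum
          intro i _
          calc (Finset.Icc (s i) (s i + 2*k) ∪ Finset.Icc (t i + 1 - 2*k) (t i + 1)).card
              ≤ (Finset.Icc (s i) (s i + 2*k)).card
                + (Finset.Icc (t i + 1 - 2*k) (t i + 1)).card := Finset.card_union_le _ _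
            _ ≤ C := by rw [Nat.card_Icc, Nat.card_Icc, hC]; omega
      _ = (s i₀ + 1) + I * C := by
          rw [Finset.sum_const, Finset.card_range, smul_eq_mul]
    have hle := Set.ncard_le_ncard hsub (F.finite_toSet)
    rw [Set.ncard_coe_finset] at hle
    have hICeq : I * C = (i₀ + 1)*C + (N/L)*C := by rw [hI]; ring
    calc (B ∩ Set.Icc 1 N).ncard ≤ F.card := hle
    _ ≤ (s i₀ + 1) + I*C := hcard
    _ = D + (N/L)*C := by rw [hD, hICeq]; ring
  set N₀ : ℕ := max 1 (⌈(2*D:ℝ)/ε⌉₊ + 1) with hN₀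
  refine ⟨N₀, fun N hN => ?_⟩
  have hN1 : 1 ≤ N := le_trans (le_max_left _ _) hN
  have hNpos : (0:ℝ) < N := by exact_mod_cast hN1
  have hND : (2*D:ℝ)/ε < N := by
    have h1 : (⌈(2*D:ℝ)/ε⌉₊ + 1 : ℕ) ≤ N := le_trans (le_max_right _ _) hN
    calc (2*D:ℝ)/ε ≤ (⌈(2*D:ℝ)/ε⌉₊ : ℝ) := Nat.le_ceil _
    _ < N := by exact_mod_cast h1
  rw [Real.dist_eq, sub_zero, abs_of_nonneg (by positivity)]
  have hcR : ((B ∩ Set.Icc 1 N).ncard : ℝ) ≤ (D:ℝ) + ((N/L : ℕ):ℝ)*(C:ℝ) := by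
    exact_mod_cast count N
  have hdivL : ((N/L : ℕ):ℝ) ≤ (N:ℝ)/(L:ℝ) := Nat.cast_div_le
  rw [div_lt_iff₀ hNpos]
  have e1 : ((N/L:ℕ):ℝ) * C ≤ (N:ℝ)/L * C :=
    mul_le_mul_of_nonneg_right hdivL (by positivity)
  have e2 : (N:ℝ)/(L:ℝ)*(C:ℝ) = (C:ℝ)/(L:ℝ) * N := by ring
  have e3 : (C:ℝ)/(L:ℝ)*(N:ℝ) ≤ ε/2*N := mul_le_mul_of_nonneg_right hLε.le (by positivity)
  have e4 : (D:ℝ) < ε/2*N := by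
    rw [div_lt_iff₀ hε] at hND
    linarith
  linarith

end Beta


/-- **Lemma 2.1 (property (⋆)).** -/
theorem stmt_2 (α : ℝ) (hα : α ∈ Set.Ioo (0 : ℝ) 1) (hirr : Irrational α)
    (s t : ℕ → ℕ) (hst : ∀ i, s i < t i) (hcons : ∀ i, s (i + 1) = t i + 2)
    (hgap : Tendsto (fun i => t i - s i) atTop atTop)
    (β : ℝ) (hβ : β = ∑' i : ℕ, θ α (t i + 1)) :
    ∀ ε : ℝ, 0 < ε → ∃ B : Set ℕ, DensityZero B ∧
      ∀ n ∉ B, ∀ r : ℕ, 1 ≤ r → r ≤ a α (n + 1) →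
        ‖((r * q α n : ℕ) : ℤ) • (↑β : Circle1)‖ < ε := by
  intro ε hε
  obtain ⟨k, hk⟩ : ∃ k : ℕ, 4 / 2^k < ε := by
    obtain ⟨k, hk⟩ := pow_unbounded_of_one_lt (4/ε) (one_lt_two (α := ℝ))
    refine ⟨k, ?_⟩
    rw [div_lt_iff₀ (by positivity)]
    rw [div_lt_iff₀ hε] at hk
    nlinarith [pow_pos (two_pos (α := ℝ)) k]
  refine ⟨{n : ℕ | ¬ ∃ i, s i + 2*k ≤ n ∧ n + 2*k ≤ t i}, density_bad hst hcons hgap k, ?_⟩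
  intro n hn r hr1 hr2
  have hn' : ∃ i, s i + 2*k ≤ n ∧ n + 2*k ≤ t i := by
    by_contra h; exact hn h
  obtain ⟨i, h1, h2⟩ := hn'
  exact lt_of_le_of_lt (main_est hα hirr hst hcons hβ k n i r h1 h2 hr1 hr2) hk
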